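/- Let f : ℝ → ℝ be a smooth function with f(u) > 0 for all u. Then f satisfies 4·f(u)²·f'''(u) − 6·f(u)·f'(u)·f''(u) + 3·f'(u)³ = 0 for all u ∈ ℝ if and only if there exist real constants C₁, C₂, C₃ such that f(u) = (C₁u² + C₂u + C₃)² for all u ∈ ℝ. (Equivalently: a positive smooth f is the square of a quadratic polynomial iff 4f²f''' − 6ff'f'' + 3f'³ = 0.) -/

import Mathlib

open Real

private lemma one_le_inf : ((⊤ : ℕ∞) : WithTop ℕ∞) ≠ 0 := by
  simp

private lemma sq_derivs (g : ℝ → ℝ) (hg : ContDiff ℝ (⊤ : ℕ∞) g) :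
    deriv (fun x => g x ^ 2) = (fun x => 2 * g x * deriv g x) ∧
    deriv (fun x => 2 * g x * deriv g x)
      = (fun x => 2 * (deriv g x)^2 + 2 * g x * deriv (deriv g) x) ∧
    deriv (fun x => 2 * (deriv g x)^2 + 2 * g x * deriv (deriv g) x)
      = (fun x => 6 * deriv g x * deriv (deriv g) x
          + 2 * g x * deriv (deriv (deriv g)) x) := by
  have hg1 : ContDiff ℝ (⊤ : ℕ∞) (deriv g) := (contDiff_infty_iff_deriv.mp hg).2
  have hg2 : ContDiff ℝ (⊤ : ℕ∞) (deriv (deriv g)) := (contDiff_infty_iff_deriv.mp hg1).2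
  have hgd : Differentiable ℝ g := hg.differentiable one_le_inf
  have hg1d : Differentiable ℝ (deriv g) := hg1.differentiable one_le_inf
  have hg2d : Differentiable ℝ (deriv (deriv g)) := hg2.differentiable one_le_inf
  refine ⟨funext fun x => ?_, funext fun x => ?_, funext fun x => ?_⟩
  · have h := ((hgd x).hasDerivAt).pow 2
    rw [HasDerivAt.deriv (f := fun x => g x ^ 2) h]; push_cast; ring
  · have h := (((hgd x).hasDerivAt).const_mul (2:ℝ)).mul ((hg1d x).hasDerivAt)
    rw [HasDerivAt.deriv (f := fun x => 2 * g x * deriv g x) h]; ring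
  · have h1 := (((hg1d x).hasDerivAt).pow 2).const_mul (2:ℝ)
    have h2 := (((hgd x).hasDerivAt).const_mul (2:ℝ)).mul ((hg2d x).hasDerivAt)
    have h := h1.add h2
    rw [HasDerivAt.deriv (f := fun x => 2 * (deriv g x)^2 + 2 * g x * deriv (deriv g) x) h]; push_cast; ring

/-- A positive smooth function `f` is the square of a quadratic polynomial iff
`4 f² f''' - 6 f f' f'' + 3 f'³ = 0`. -/
theorem square_of_quadratic_iff (f : ℝ → ℝ) (hf : ContDiff ℝ (⊤ : ℕ∞) f)
    (hpos : ∀ u, 0 < f u) :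
    (∀ u, 4 * (f u)^2 * deriv (deriv (deriv f)) u
        - 6 * f u * deriv f u * deriv (deriv f) u + 3 * (deriv f u)^3 = 0)
    ↔ ∃ C₁ C₂ C₃ : ℝ, ∀ u, f u = (C₁ * u^2 + C₂ * u + C₃)^2 := by
  constructor
  · intro hode
    -- g = sqrt ∘ f
    set g : ℝ → ℝ := fun u => Real.sqrt (f u) with hgdef
    have hgpos : ∀ u, 0 < g u := fun u => Real.sqrt_pos.mpr (hpos u)
    have hg : ContDiff ℝ (⊤ : ℕ∞) g := by
      rw [contDiff_iff_contDiffAt]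
      exact fun x => (hf.contDiffAt).sqrt (hpos x).ne'
    have hf2 : f = fun x => g x ^ 2 := funext fun u => (Real.sq_sqrt (hpos u).le).symm
    obtain ⟨e1, e2, e3⟩ := sq_derivs g hg
    have hg1 : ContDiff ℝ (⊤ : ℕ∞) (deriv g) := (contDiff_infty_iff_deriv.mp hg).2
    have hg2 : ContDiff ℝ (⊤ : ℕ∞) (deriv (deriv g)) := (contDiff_infty_iff_deriv.mp hg1).2
    have hgd : Differentiable ℝ g := hg.differentiable one_le_inf
    have hg1d : Differentiable ℝ (deriv g) := hg1.differentiable one_le_inf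
    have hg2d : Differentiable ℝ (deriv (deriv g)) := hg2.differentiable one_le_inf
    -- third derivative of g vanishes
    have key : ∀ u, deriv (deriv (deriv g)) u = 0 := by
      intro u
      have h := hode u
      rw [hf2] at h
      rw [e1, e2, e3] at h
      beta_reduce at h
      have h8 : (8 * (g u)^5) * deriv (deriv (deriv g)) u = 0 := by
        linear_combination h
      rcases mul_eq_zero.mp h8 with h' | h'
      · exfalso
        have : (0:ℝ) < 8 * (g u)^5 := by
          have := pow_pos (hgpos u) 5; linarith
        linarith
      · exact h'
    -- integrate thrice
    set A : ℝ := deriv (deriv g) 0 with hA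
    have hgg2 : ∀ x, deriv (deriv g) x = A :=
      fun x => is_const_of_deriv_eq_zero hg2d key x 0
    set B : ℝ := deriv g 0 with hB
    have hgg1 : ∀ x, deriv g x = A * x + B := by
      intro x
      have hp : Differentiable ℝ (fun x => deriv g x - A * x) :=
        hg1d.sub (differentiable_id.const_mul A)
      have hp' : ∀ x, deriv (fun x => deriv g x - A * x) x = 0 := by
        intro x
        have h := ((hg1d x).hasDerivAt).sub (((hasDerivAt_id' x : HasDerivAt (fun y : ℝ => y) 1 x)).const_mul A)
        rw [HasDerivAt.deriv (f := fun x => deriv g x - A * x) h, hgg2 x]; ring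
      have := is_const_of_deriv_eq_zero hp hp' x 0
      simp only [mul_zero, sub_zero] at this
      linarith [this]
    set C : ℝ := g 0 with hC
    have hgg0 : ∀ x, g x = A / 2 * x ^ 2 + B * x + C := by
      intro x
      have hq : Differentiable ℝ (fun x => g x - (A / 2 * x ^ 2 + B * x)) := by
        apply hgd.sub
        exact ((differentiable_pow 2).const_mul _).add (differentiable_id.const_mul B)
      have hq' : ∀ x, deriv (fun x => g x - (A / 2 * x ^ 2 + B * x)) x = 0 := by
        intro x
        have h := ((hgd x).hasDerivAt).sub
          (((hasDerivAt_pow 2 x).const_mul (A/2)).add (((hasDerivAt_id' x : HasDerivAt (fun y : ℝ => y) 1 x)).const_mul B))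
        rw [HasDerivAt.deriv (f := fun x => g x - (A / 2 * x ^ 2 + B * x)) h, hgg1 x]; push_cast; ring
      have := is_const_of_deriv_eq_zero hq hq' x 0
      simp only [ne_eq, OfNat.ofNat_ne_zero, not_false_eq_true, zero_pow, mul_zero,
        add_zero, sub_zero] at this
      linarith [this]
    refine ⟨A / 2, B, C, fun u => ?_⟩
    rw [hf2]
    beta_reduce
    rw [hgg0 u]
  · rintro ⟨C₁, C₂, C₃, h⟩ u
    -- f is an explicit quartic polynomial
    have hf4 : f = fun u => C₁^2*u^4 + 2*C₁*C₂*u^3 + (C₂^2 + 2*C₁*C₃)*u^2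
        + 2*C₂*C₃*u + C₃^2 := by
      funext u; rw [h u]; ring
    have hd : ∀ (a b c d e : ℝ), deriv (fun u : ℝ => a*u^4 + b*u^3 + c*u^2 + d*u + e)
        = fun u => 4*a*u^3 + 3*b*u^2 + 2*c*u + d := by
      intro a b c d e
      funext x
      have h1 := (((((hasDerivAt_pow 4 x).const_mul a).add
        ((hasDerivAt_pow 3 x).const_mul b)).add
        ((hasDerivAt_pow 2 x).const_mul c)).add
        (((hasDerivAt_id' x : HasDerivAt (fun y : ℝ => y) 1 x)).const_mul d)).add_const e
      rw [HasDerivAt.deriv (f := fun u : ℝ => a*u^4 + b*u^3 + c*u^2 + d*u + e) h1]; push_cast; ring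
    have hd3 : ∀ (a b c d : ℝ), deriv (fun u : ℝ => a*u^3 + b*u^2 + c*u + d)
        = fun u => 3*a*u^2 + 2*b*u + c := by
      intro a b c d
      funext x
      have h1 := ((((hasDerivAt_pow 3 x).const_mul a).add
        ((hasDerivAt_pow 2 x).const_mul b)).add
        (((hasDerivAt_id' x : HasDerivAt (fun y : ℝ => y) 1 x)).const_mul c)).add_const d
      rw [HasDerivAt.deriv (f := fun u : ℝ => a*u^3 + b*u^2 + c*u + d) h1]; push_cast; ring
    have hd2 : ∀ (a b c : ℝ), deriv (fun u : ℝ => a*u^2 + b*u + c)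
        = fun u => 2*a*u + b := by
      intro a b c
      funext x
      have h1 := (((hasDerivAt_pow 2 x).const_mul a).add
        (((hasDerivAt_id' x : HasDerivAt (fun y : ℝ => y) 1 x)).const_mul b)).add_const c
      rw [HasDerivAt.deriv (f := fun u : ℝ => a*u^2 + b*u + c) h1]; push_cast; ring
    rw [hf4]
    rw [hd, show (fun u : ℝ => 4*(C₁^2)*u^3 + 3*(2*C₁*C₂)*u^2 + 2*(C₂^2 + 2*C₁*C₃)*u + 2*C₂*C₃)
        = fun u : ℝ => (4*C₁^2)*u^3 + (6*C₁*C₂)*u^2 + (2*(C₂^2 + 2*C₁*C₃))*u + 2*C₂*C₃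
      from by funext x; ring]
    rw [hd3, show (fun u : ℝ => 3*(4*C₁^2)*u^2 + 2*(6*C₁*C₂)*u + 2*(C₂^2 + 2*C₁*C₃))
        = fun u : ℝ => (12*C₁^2)*u^2 + (12*C₁*C₂)*u + 2*(C₂^2 + 2*C₁*C₃)
      from by funext x; ring]
    rw [hd2]
    beta_reduce
    ring
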